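/- Let G₁, G₂, G₃ denote the cyclic subgroups of G_{123} generated by a₁, a₂, a₃ respectively. If g, g′ ∈ G₁ ∪ G₃ and h, h′ ∈ G₂ satisfy g·h = g′·h′ in G_{123}, then g = g′ and h = h′. -/

import Mathlib

/-- The relators of the group G_{123} = ⟨a₁, a₂, a₃ ∣ a₂a₁a₂⁻¹ = a₁², a₃a₂a₃⁻¹ = a₂²⟩
(generator of index `i` standing for `a_{i+1}`). The group G_{341} = ⟨a₃, a₄, a₁ ∣
a₄a₃a₄⁻¹ = a₃², a₁a₄a₁⁻¹ = a₄²⟩ has the same presentation, with the generator of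
index `0` standing for `a₃`, index `1` for `a₄` and index `2` for `a₁`. -/
def chainRels : Set (FreeGroup (Fin 3)) :=
  {FreeGroup.of 1 * FreeGroup.of 0 * (FreeGroup.of 1)⁻¹ * (FreeGroup.of 0 * FreeGroup.of 0)⁻¹,
   FreeGroup.of 2 * FreeGroup.of 1 * (FreeGroup.of 2)⁻¹ * (FreeGroup.of 1 * FreeGroup.of 1)⁻¹}

/-- The group G_{123} (and also, under a different reading of the generators, G_{341}). -/
abbrev Gchain : Type := PresentedGroup chainRels

/-- The generators of G_{123} (resp. G_{341}). -/
def cgen (i : Fin 3) : Gchain := PresentedGroup.of i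

/-- The cyclic subgroup G₁ = ⟨a₁⟩ of G_{123}. -/
def G1 : Subgroup Gchain := Subgroup.zpowers (cgen 0)

/-- The cyclic subgroup G₂ = ⟨a₂⟩ of G_{123}. -/
def G2 : Subgroup Gchain := Subgroup.zpowers (cgen 1)

/-- The cyclic subgroup G₃ = ⟨a₃⟩ of G_{123}. -/
def G3 : Subgroup Gchain := Subgroup.zpowers (cgen 2)

noncomputable section ChainAux

/-- The permutation `x ↦ x * |x|` of `ℝ`, a "signed squaring" map. -/
def chainE3 : Equiv.Perm ℝ where
  toFun x := x * |x|
  invFun y := y / Real.sqrt |y|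
  left_inv x := by
    simp only
    rw [abs_mul, abs_abs, ← sq, Real.sqrt_sq_eq_abs, abs_abs]
    rcases eq_or_ne x 0 with h | h
    · simp [h]
    · rw [mul_div_assoc, div_self (abs_ne_zero.2 h), mul_one]
  right_inv y := by
    simp only
    rcases eq_or_ne y 0 with h | h
    · simp [h]
    · have hs : 0 < Real.sqrt |y| := Real.sqrt_pos.2 (abs_pos.2 h)
      rw [abs_div, abs_of_pos hs, div_mul_div_comm, Real.mul_self_sqrt (abs_nonneg y),
        mul_div_assoc, div_self (abs_ne_zero.2 h), mul_one]

lemma chainE3_apply (x : ℝ) : chainE3 x = x * |x| := rfl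

lemma chainE3_symm_apply (x : ℝ) : chainE3.symm x = x / Real.sqrt |x| := rfl

lemma chainE3_apply_pos {x : ℝ} (hx : 0 < x) : chainE3 x = x ^ (2:ℝ) := by
  rw [chainE3_apply, abs_of_pos hx, show ((2:ℝ)) = ((2:ℕ):ℝ) by norm_num,
    Real.rpow_natCast, sq]

lemma chainE3_symm_apply_pos {x : ℝ} (hx : 0 < x) : chainE3.symm x = x ^ ((2:ℝ)⁻¹) := by
  rw [chainE3_symm_apply, abs_of_pos hx, Real.sqrt_eq_rpow,
    show ((2:ℝ)⁻¹) = 1 - 1/2 by norm_num, Real.rpow_sub hx, Real.rpow_one]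

lemma chainE3_zpow_zero_apply (p : ℤ) : (chainE3 ^ p) 0 = 0 := by
  induction p using Int.induction_on with
  | zero => simp
  | succ n ih =>
      have h0 : chainE3 0 = 0 := by rw [chainE3_apply]; simp
      rw [zpow_add_one, Equiv.Perm.mul_apply, h0, ih]
  | pred n ih =>
      have h0 : chainE3⁻¹ 0 = 0 := by rw [Equiv.Perm.inv_def, chainE3_symm_apply]; simp
      rw [zpow_sub_one, Equiv.Perm.mul_apply, h0, ih]

lemma chainE3_zpow_pos_apply (p : ℤ) {x : ℝ} (hx : 0 < x) :
    (chainE3 ^ p) x = x ^ ((2:ℝ) ^ p) := by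
  induction p using Int.induction_on generalizing x with
  | zero => simp
  | succ n ih =>
      rw [zpow_add_one, Equiv.Perm.mul_apply, chainE3_apply_pos hx,
        ih (Real.rpow_pos_of_pos hx 2), ← Real.rpow_mul hx.le,
        zpow_add_one₀ (two_ne_zero), mul_comm]
  | pred n ih =>
      rw [zpow_sub_one, Equiv.Perm.mul_apply, Equiv.Perm.inv_def, chainE3_symm_apply_pos hx,
        ih (Real.rpow_pos_of_pos hx _), ← Real.rpow_mul hx.le,
        zpow_sub_one₀ (two_ne_zero), mul_comm]

lemma chain_addRight_one_zpow_apply (p : ℤ) (x : ℝ) :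
    ((Equiv.addRight (1:ℝ)) ^ p) x = x + p := by
  induction p using Int.induction_on generalizing x with
  | zero => simp
  | succ n ih => rw [zpow_add_one, Equiv.Perm.mul_apply, ih]; push_cast; simp; ring
  | pred n ih =>
      rw [zpow_sub_one, Equiv.Perm.mul_apply, Equiv.Perm.inv_def, ih]
      push_cast; simp; ring

lemma chain_mulLeft_two_zpow_apply (s : ℤ) (x : ℝ) :
    ((Equiv.mulLeft₀ (2:ℝ) two_ne_zero) ^ s) x = 2 ^ s * x := by
  induction s using Int.induction_on generalizing x with
  | zero => simp
  | succ n ih =>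
      rw [zpow_add_one, Equiv.Perm.mul_apply, ih, zpow_add_one₀ (two_ne_zero)]
      simp; ring
  | pred n ih =>
      rw [zpow_sub_one, Equiv.Perm.mul_apply, Equiv.Perm.inv_def, ih,
        zpow_sub_one₀ (two_ne_zero)]
      simp; ring

/-- The images of the generators under a concrete faithful-enough action on `ℝ`:
`a₁ ↦ (x ↦ x + 1)`, `a₂ ↦ (x ↦ 2x)`, `a₃ ↦ (x ↦ x|x|)`. -/
def chainF : Fin 3 → Equiv.Perm ℝ :=
  ![Equiv.addRight 1, Equiv.mulLeft₀ 2 two_ne_zero, chainE3]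

lemma chainF_rels : ∀ r ∈ chainRels, FreeGroup.lift chainF r = 1 := by
  intro r hr
  simp only [chainRels, Set.mem_insert_iff, Set.mem_singleton_iff] at hr
  rcases hr with rfl | rfl <;>
  · simp only [map_mul, map_inv, FreeGroup.lift_apply_of]
    rw [mul_inv_eq_one, mul_inv_eq_iff_eq_mul]
    ext x
    simp [chainF, chainE3_apply, Equiv.Perm.mul_apply, abs_mul]
    ring

/-- The induced homomorphism `Gchain →* Perm ℝ`. -/
def chainPhi : Gchain →* Equiv.Perm ℝ := PresentedGroup.toGroup chainF_rels

lemma chainPhi_gen (i : Fin 3) : chainPhi (cgen i) = chainF i :=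
  PresentedGroup.toGroup.of chainF_rels

lemma chain_two_rpow_inj {a b : ℝ} (h : (2:ℝ)^a = 2^b) : a = b :=
  le_antisymm ((Real.rpow_le_rpow_left_iff one_lt_two).1 h.le)
    ((Real.rpow_le_rpow_left_iff one_lt_two).1 h.ge)

lemma chain_two_zpow_inj {a b : ℤ} (h : (2:ℝ)^a = 2^b) : a = b :=
  zpow_right_injective₀ two_pos (by norm_num) h

lemma chainE3_zpow_at (p m : ℤ) :
    (chainE3 ^ p) ((2:ℝ)^m) = (2:ℝ) ^ ((m:ℝ) * (2:ℝ)^p) := by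
  rw [chainE3_zpow_pos_apply p (zpow_pos two_pos m), ← Real.rpow_intCast 2 m,
    ← Real.rpow_mul (by norm_num : (0:ℝ) ≤ 2)]

/-- The pointwise consequence of an equation `a_{i+1}^p a₂^s = a_{j+1}^q a₂^t` in `Gchain`. -/
lemma chain_eval {i j : Fin 3} {p s q t : ℤ}
    (heq : cgen i ^ p * cgen 1 ^ s = cgen j ^ q * cgen 1 ^ t) (x : ℝ) :
    (chainF i ^ p) ((2:ℝ)^s * x) = (chainF j ^ q) ((2:ℝ)^t * x) := by
  have h := congrArg chainPhi heq
  simp only [map_mul, map_zpow, chainPhi_gen] at h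
  have h2 := DFunLike.congr_fun h x
  simp only [Equiv.Perm.mul_apply] at h2
  rwa [show chainF 1 = Equiv.mulLeft₀ 2 two_ne_zero from rfl,
    chain_mulLeft_two_zpow_apply, chain_mulLeft_two_zpow_apply] at h2

lemma chain_auxA {p s q t : ℤ}
    (heq : cgen 0 ^ p * cgen 1 ^ s = cgen 0 ^ q * cgen 1 ^ t) : p = q := by
  have h0 := chain_eval heq 0
  rw [show chainF 0 = Equiv.addRight 1 from rfl, chain_addRight_one_zpow_apply,
    chain_addRight_one_zpow_apply] at h0
  simp only [mul_zero, zero_add] at h0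
  exact_mod_cast h0

lemma chain_auxB {p s q t : ℤ}
    (heq : cgen 2 ^ p * cgen 1 ^ s = cgen 2 ^ q * cgen 1 ^ t) : p = q := by
  have h1 := chain_eval heq 1
  have h2 := chain_eval heq 2
  rw [show chainF 2 = chainE3 from rfl, mul_one, mul_one, chainE3_zpow_at,
    chainE3_zpow_at] at h1
  rw [show chainF 2 = chainE3 from rfl,
    show (2:ℝ)^s * 2 = 2^(s+1) by rw [zpow_add_one₀ two_ne_zero],
    show (2:ℝ)^t * 2 = 2^(t+1) by rw [zpow_add_one₀ two_ne_zero],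
    chainE3_zpow_at, chainE3_zpow_at] at h2
  have e1 := chain_two_rpow_inj h1
  have e2 := chain_two_rpow_inj h2
  push_cast at e1 e2
  have hc : (2:ℝ)^p = (2:ℝ)^q := by linear_combination e2 - e1
  exact chain_two_zpow_inj hc

lemma chain_auxC {p s q t : ℤ}
    (heq : cgen 0 ^ p * cgen 1 ^ s = cgen 2 ^ q * cgen 1 ^ t) : p = 0 ∧ q = 0 := by
  have hF0 : chainF 0 = Equiv.addRight 1 := rfl
  have hF2 : chainF 2 = chainE3 := rfl
  have h0 := chain_eval heq 0
  rw [hF0, hF2, chain_addRight_one_zpow_apply] at h0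
  simp only [mul_zero, zero_add, chainE3_zpow_zero_apply] at h0
  have hp : p = 0 := by exact_mod_cast h0
  subst hp
  have h1 := chain_eval heq 1
  have h2 := chain_eval heq 2
  rw [hF0, hF2, zpow_zero, Equiv.Perm.one_apply, mul_one, mul_one,
    chainE3_zpow_at] at h1
  rw [hF0, hF2, zpow_zero, Equiv.Perm.one_apply,
    show (2:ℝ)^s * 2 = 2^(s+1) by rw [zpow_add_one₀ two_ne_zero],
    show (2:ℝ)^t * 2 = 2^(t+1) by rw [zpow_add_one₀ two_ne_zero],
    chainE3_zpow_at] at h2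
  rw [← Real.rpow_intCast 2 s] at h1
  rw [← Real.rpow_intCast 2 (s+1)] at h2
  have e1 := chain_two_rpow_inj h1
  have e2 := chain_two_rpow_inj h2
  push_cast at e1 e2
  have hc : (2:ℝ)^q = (2:ℝ)^(0:ℤ) := by
    rw [zpow_zero]
    linear_combination e1 - e2
  exact ⟨rfl, chain_two_zpow_inj hc⟩

end ChainAux

/-- In G_{123}, if `g, g′ ∈ G₁ ∪ G₃` and `h, h′ ∈ G₂` satisfy
`g·h = g′·h′`, then `g = g′` and `h = h′`. -/
theorem gchain_unique_factorization
    (g g' h h' : Gchain)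
    (hg : g ∈ (G1 : Set Gchain) ∪ (G3 : Set Gchain))
    (hg' : g' ∈ (G1 : Set Gchain) ∪ (G3 : Set Gchain))
    (hh : h ∈ G2) (hh' : h' ∈ G2)
    (heq : g * h = g' * h') :
    g = g' ∧ h = h' := by
  rw [Set.mem_union, SetLike.mem_coe, SetLike.mem_coe] at hg hg'
  simp only [G1, G3, Subgroup.mem_zpowers_iff] at hg hg'
  simp only [G2, Subgroup.mem_zpowers_iff] at hh hh'
  obtain ⟨s, rfl⟩ := hh
  obtain ⟨t, rfl⟩ := hh'
  rcases hg with ⟨p, rfl⟩ | ⟨p, rfl⟩ <;> rcases hg' with ⟨q, rfl⟩ | ⟨q, rfl⟩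
  · obtain rfl : p = q := chain_auxA heq
    exact ⟨rfl, mul_left_cancel heq⟩
  · obtain ⟨hp, hq⟩ := chain_auxC heq
    subst hp; subst hq
    rw [zpow_zero, zpow_zero] at heq ⊢
    rw [one_mul, one_mul] at heq
    exact ⟨rfl, heq⟩
  · obtain ⟨hq, hp⟩ := chain_auxC heq.symm
    subst hp; subst hq
    rw [zpow_zero, zpow_zero] at heq ⊢
    rw [one_mul, one_mul] at heq
    exact ⟨rfl, heq⟩
  · obtain rfl : p = q := chain_auxB heq
    exact ⟨rfl, mul_left_cancel heq⟩
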